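/- Let S = diag(s₁,s₂,s₃) with s₁ ≥ s₂ ≥ |s₃| ≥ 0, and let dᵢ(S) be the diagonal entries of the first moment of the matrix Fisher distribution M(S). Then for any pair of distinct indices i, j ∈ {1,2,3}: sᵢ = sⱼ = 0 if and only if dᵢ(S) = dⱼ(S) = 0. -/

import Mathlib

open MeasureTheory Matrix

noncomputable section

/-- The space of real `3 × 3` matrices. -/
abbrev M3 := Matrix (Fin 3) (Fin 3) ℝ

instance : MeasurableSpace M3 := (inferInstance : MeasurableSpace (Fin 3 → Fin 3 → ℝ))

/-- The special orthogonal group `SO(3)`: real `3 × 3` matrices `R` with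
`Rᵀ R = 1` and `det R = 1`. -/
def SO3 : Set M3 := {R | Rᵀ * R = 1 ∧ R.det = 1}

/-- `μ` is the Haar probability measure of the compact group `SO(3)`, viewed as a measure
on the ambient space of `3 × 3` matrices: it is a probability measure carried by `SO3`
which is invariant under left and right translation by elements of `SO3`. -/
structure IsHaarSO3 (μ : Measure M3) : Prop where
  prob : IsProbabilityMeasure μ
  carried : μ SO3ᶜ = 0
  map_left : ∀ U ∈ SO3, Measure.map (fun R => U * R) μ = μ
  map_right : ∀ V ∈ SO3, Measure.map (fun R => R * V) μ = μ

/-- The normalizing constant `c(S)` of the matrix Fisher distribution with diagonal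
parameter `S = diag s`. -/
def cS (μ : Measure M3) (s : Fin 3 → ℝ) : ℝ :=
  ∫ Q, Real.exp ((Matrix.diagonal s * Q).trace) ∂μ

/-- The matrix Fisher density `p_S(Q) = exp(tr(S Q)) / c(S)` with diagonal parameter
`S = diag s`. -/
def pS (μ : Measure M3) (s : Fin 3 → ℝ) (Q : M3) : ℝ :=
  Real.exp ((Matrix.diagonal s * Q).trace) / cS μ s

/-- `dᵢ(S)`: the `i`-th diagonal entry of the first moment `E[Q]` of the matrix Fisher
distribution `M(S)` with `S = diag s`. -/
def dS (μ : Measure M3) (s : Fin 3 → ℝ) (i : Fin 3) : ℝ :=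
  ∫ Q, Q i i * pS μ s Q ∂μ

-- entry continuity
lemma cont_entry (a b : Fin 3) : Continuous fun Q : M3 => Q a b :=
  (continuous_apply b).comp (continuous_apply a)

-- column norm
lemma col_norm {Q : M3} (hQ : Q ∈ SO3) (b : Fin 3) :
    Q 0 b ^ 2 + Q 1 b ^ 2 + Q 2 b ^ 2 = 1 := by
  have := congrFun (congrFun hQ.1 b) b
  simpa [Matrix.mul_apply, Fin.sum_univ_three, Matrix.one_apply, sq] using this

lemma entry_abs_le {Q : M3} (hQ : Q ∈ SO3) (a b : Fin 3) : |Q a b| ≤ 1 := by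
  have h := col_norm hQ b
  have h0 : (Q 0 b)^2 ≤ 1 := by nlinarith [sq_nonneg (Q 1 b), sq_nonneg (Q 2 b)]
  have h1 : (Q 1 b)^2 ≤ 1 := by nlinarith [sq_nonneg (Q 0 b), sq_nonneg (Q 2 b)]
  have h2 : (Q 2 b)^2 ≤ 1 := by nlinarith [sq_nonneg (Q 0 b), sq_nonneg (Q 1 b)]
  have aux : ∀ x : ℝ, x^2 ≤ 1 → |x| ≤ 1 := by
    intro x hx
    nlinarith [abs_nonneg x, sq_abs x]
  fin_cases a
  · exact aux _ h0
  · exact aux _ h1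
  · exact aux _ h2

instance : BorelSpace M3 := (inferInstance : BorelSpace (Fin 3 → Fin 3 → ℝ))

lemma ae_mem_SO3 {μ : Measure M3} (hμ : IsHaarSO3 μ) : ∀ᵐ Q ∂μ, Q ∈ SO3 :=
  mem_ae_iff.mpr hμ.carried

lemma integrable_of_bdd {μ : Measure M3} (hμ : IsHaarSO3 μ) {f : M3 → ℝ}
    (hf : Continuous f) {C : ℝ} (hC : ∀ Q ∈ SO3, |f Q| ≤ C) : Integrable f μ := by
  haveI := hμ.prob
  refine (integrable_const C).mono' hf.aestronglyMeasurable ?_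
  exact (ae_mem_SO3 hμ).mono fun Q hQ => by simpa [Real.norm_eq_abs] using hC Q hQ

lemma cov {μ : Measure M3} (hμ : IsHaarSO3 μ) {U V : M3} (hU : U ∈ SO3) (hV : V ∈ SO3)
    (f : M3 → ℝ) (hf : Continuous f) : ∫ Q, f (U * Q * V) ∂μ = ∫ Q, f Q ∂μ := by
  have hL : Continuous fun Q : M3 => U * Q := continuous_const.matrix_mul continuous_id
  have hR : Continuous fun Q : M3 => Q * V := continuous_id.matrix_mul continuous_const
  have hφ : Measure.map (fun Q : M3 => U * Q * V) μ = μ := by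
    have hc : (fun Q : M3 => U * Q * V) = (fun R : M3 => R * V) ∘ (fun Q : M3 => U * Q) := rfl
    rw [hc, ← Measure.map_map hR.measurable hL.measurable, hμ.map_left U hU, hμ.map_right V hV]
  calc ∫ Q, f (U * Q * V) ∂μ
      = ∫ R, f R ∂(Measure.map (fun Q : M3 => U * Q * V) μ) :=
        (integral_map (hL.matrix_mul continuous_const).aemeasurable
          hf.aestronglyMeasurable).symm
    _ = ∫ Q, f Q ∂μ := by rw [hφ]

/-- linear combination of diagonal entries -/
def lc (c : Fin 3 → ℝ) (Q : M3) : ℝ := c 0 * Q 0 0 + c 1 * Q 1 1 + c 2 * Q 2 2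

lemma trace_eq (s : Fin 3 → ℝ) (Q : M3) : (Matrix.diagonal s * Q).trace = lc s Q := by
  simp [Matrix.trace, Matrix.diag, Matrix.diagonal_mul, Fin.sum_univ_three, lc]

lemma cont_lc (c : Fin 3 → ℝ) : Continuous (lc c) := by
  unfold lc
  fun_prop

lemma lc_abs_le (c : Fin 3 → ℝ) {Q : M3} (hQ : Q ∈ SO3) :
    |lc c Q| ≤ |c 0| + |c 1| + |c 2| := by
  have h0 := entry_abs_le hQ 0 0
  have h1 := entry_abs_le hQ 1 1
  have h2 := entry_abs_le hQ 2 2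
  have e0 : |c 0 * Q 0 0| ≤ |c 0| := by
    rw [abs_mul]; exact mul_le_of_le_one_right (abs_nonneg _) h0
  have e1 : |c 1 * Q 1 1| ≤ |c 1| := by
    rw [abs_mul]; exact mul_le_of_le_one_right (abs_nonneg _) h1
  have e2 : |c 2 * Q 2 2| ≤ |c 2| := by
    rw [abs_mul]; exact mul_le_of_le_one_right (abs_nonneg _) h2
  calc |lc c Q| ≤ |c 0 * Q 0 0 + c 1 * Q 1 1| + |c 2 * Q 2 2| := abs_add_le _ _
    _ ≤ (|c 0 * Q 0 0| + |c 1 * Q 1 1|) + |c 2 * Q 2 2| := by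
        gcongr; exact abs_add_le _ _
    _ ≤ |c 0| + |c 1| + |c 2| := by linarith


attribute [local simp] Matrix.vecMul dotProduct

def P01 : M3 := Matrix.of ![![0,1,0],![1,0,0],![0,0,-1]]

lemma mul_exp_sub_one_nonneg (u : ℝ) : 0 ≤ u * (Real.exp u - 1) := by
  rcases le_or_gt 0 u with h | h
  · have : (1:ℝ) ≤ Real.exp u := by
      simpa using Real.exp_le_exp.mpr h
    nlinarith
  · have : Real.exp u < 1 := by
      simpa using Real.exp_lt_exp.mpr h
    nlinarith

lemma mul_exp_sub_one_eq_zero {u : ℝ} (h : u * (Real.exp u - 1) = 0) : u = 0 := by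
  rcases lt_trichotomy u 0 with hu | hu | hu
  · have h1 : Real.exp u < 1 := by simpa using Real.exp_lt_exp.mpr hu
    nlinarith
  · exact hu
  · have h1 : (1:ℝ) < Real.exp u := by simpa using Real.exp_lt_exp.mpr hu
    nlinarith

lemma half {μ : Measure M3} (hμ : IsHaarSO3 μ) (s : Fin 3 → ℝ) (i j : Fin 3) (ε : ℝ)
    (hε : ε * ε = 1) {U V : M3} (hU : U ∈ SO3) (hV : V ∈ SO3) (sp : Fin 3 → ℝ) (κ : ℝ)
    (h1 : ∀ Q : M3, (U*Q*V) i i + ε * (U*Q*V) j j = -(Q i i + ε * Q j j))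
    (h2 : ∀ Q : M3, lc s (U*Q*V) = lc sp Q)
    (h3 : ∀ Q : M3, lc s Q = lc sp Q + κ * (Q i i + ε * Q j j))
    (hcross : ∫ Q, Q i i * Q j j ∂μ = 0)
    (hsq : ∫ Q, (Q j j)^2 ∂μ = 1/3) :
    ((∫ Q, (Q i i + ε * Q j j) * Real.exp (lc s Q) ∂μ = 0) ↔ κ = 0) := by
  have hepsabs : |ε| = 1 := by
    nlinarith [abs_nonneg ε, sq_abs ε, sq_nonneg (|ε| - 1)]
  set α : M3 → ℝ := fun Q => Q i i + ε * Q j j with hαdef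
  have hcα : Continuous α := ((cont_entry i i).add (continuous_const.mul (cont_entry j j)))
  have hαb : ∀ Q ∈ SO3, |α Q| ≤ 2 := by
    intro Q hQ
    have e1 := entry_abs_le hQ i i
    have e2 := entry_abs_le hQ j j
    calc |α Q| ≤ |Q i i| + |ε * Q j j| := abs_add_le _ _
      _ ≤ 1 + 1 := by rw [abs_mul, hepsabs, one_mul]; exact add_le_add e1 e2
      _ = 2 := by norm_num
  have hcf : Continuous fun Q => α Q * Real.exp (lc s Q) :=
    hcα.mul (Real.continuous_exp.comp (cont_lc s))
  have hcg : Continuous fun Q => α Q * Real.exp (lc sp Q) :=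
    hcα.mul (Real.continuous_exp.comp (cont_lc sp))
  have hbexp : ∀ (c : Fin 3 → ℝ) (Q : M3), Q ∈ SO3 →
      |α Q * Real.exp (lc c Q)| ≤ 2 * Real.exp (|c 0| + |c 1| + |c 2|) := by
    intro c Q hQ
    rw [abs_mul, Real.abs_exp]
    have := lc_abs_le c hQ
    have hle : lc c Q ≤ |c 0| + |c 1| + |c 2| := (le_abs_self _).trans this
    exact mul_le_mul (hαb Q hQ) (Real.exp_le_exp.mpr hle) (Real.exp_pos _).le (by norm_num)
  have hfint : Integrable (fun Q => α Q * Real.exp (lc s Q)) μ :=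
    integrable_of_bdd hμ hcf (fun Q hQ => hbexp s Q hQ)
  have hgint : Integrable (fun Q => α Q * Real.exp (lc sp Q)) μ :=
    integrable_of_bdd hμ hcg (fun Q hQ => hbexp sp Q hQ)
  set I := ∫ Q, α Q * Real.exp (lc s Q) ∂μ with hIdef
  have hIJ : I = - ∫ Q, α Q * Real.exp (lc sp Q) ∂μ := by
    have hkey := cov hμ hU hV (fun Q => α Q * Real.exp (lc s Q)) hcf
    have hpt : ∀ Q : M3, α (U*Q*V) * Real.exp (lc s (U*Q*V))
        = -(α Q * Real.exp (lc sp Q)) := by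
      intro Q
      rw [hαdef]
      simp only
      rw [h1 Q, h2 Q]
      ring
    rw [hIdef, ← hkey]
    calc ∫ Q, α (U*Q*V) * Real.exp (lc s (U*Q*V)) ∂μ
        = ∫ Q, -(α Q * Real.exp (lc sp Q)) ∂μ := by
          exact integral_congr_ae (Filter.Eventually.of_forall hpt)
      _ = - ∫ Q, α Q * Real.exp (lc sp Q) ∂μ := integral_neg _
  constructor
  · intro hI0
    by_contra hκ
    have hJ0 : ∫ Q, α Q * Real.exp (lc sp Q) ∂μ = 0 := by
      rw [hIdef] at hI0; linarith [hIJ, hI0]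
    have hKeq : ∀ Q : M3, κ * (α Q * Real.exp (lc s Q) - α Q * Real.exp (lc sp Q))
        = Real.exp (lc sp Q) * ((κ * α Q) * (Real.exp (κ * α Q) - 1)) := by
      intro Q
      rw [h3 Q, Real.exp_add]
      rw [hαdef]
      ring
    have hKnn : ∀ Q : M3, 0 ≤ κ * (α Q * Real.exp (lc s Q) - α Q * Real.exp (lc sp Q)) := by
      intro Q
      rw [hKeq Q]
      exact mul_nonneg (Real.exp_pos _).le (mul_exp_sub_one_nonneg _)
    have hKint : Integrable (fun Q => κ * (α Q * Real.exp (lc s Q) - α Q * Real.exp (lc sp Q))) μ :=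
      (hfint.sub hgint).const_mul κ
    have hK0 : ∫ Q, κ * (α Q * Real.exp (lc s Q) - α Q * Real.exp (lc sp Q)) ∂μ = 0 := by
      rw [integral_const_mul, integral_sub hfint hgint, ← hIdef, hI0, hJ0]
      ring
    have hae := (integral_eq_zero_iff_of_nonneg hKnn hKint).mp hK0
    have haeα : ∀ᵐ Q ∂μ, α Q = 0 := by
      refine hae.mono fun Q hQ => ?_
      have hQ' : κ * (α Q * Real.exp (lc s Q) - α Q * Real.exp (lc sp Q)) = 0 := hQ
      rw [hKeq Q] at hQ'
      have h2' : (κ * α Q) * (Real.exp (κ * α Q) - 1) = 0 := by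
        have := Real.exp_pos (lc sp Q)
        rcases mul_eq_zero.mp hQ' with h | h
        · exact absurd h (ne_of_gt this)
        · exact h
      have := mul_exp_sub_one_eq_zero h2'
      rcases mul_eq_zero.mp this with h | h
      · exact absurd h hκ
      · exact h
    have haecross : ∀ᵐ Q ∂μ, Q i i * Q j j = -ε * (Q j j)^2 := by
      refine haeα.mono fun Q hQ => ?_
      have : Q i i = -ε * Q j j := by rw [hαdef] at hQ; simp only at hQ; linarith
      rw [this]; ring
    have : (0:ℝ) = -ε * (1/3) := by
      rw [← hcross, ← hsq]
      rw [← integral_const_mul]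
      exact integral_congr_ae haecross
    nlinarith
  · intro hκ0
    have hsps : ∀ Q : M3, lc sp Q = lc s Q := by
      intro Q; rw [h3 Q, hκ0]; ring
    have heq : (fun Q : M3 => α Q * Real.exp (lc sp Q)) = fun Q : M3 => α Q * Real.exp (lc s Q) :=
      funext fun Q => by rw [hsps Q]
    rw [heq, ← hIdef] at hIJ
    linarith

lemma one_mem_SO3 : (1 : M3) ∈ SO3 := ⟨by simp, by simp⟩

def P02 : M3 := Matrix.of ![![0,0,1],![0,-1,0],![1,0,0]]

lemma P01_mem : P01 ∈ SO3 := by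
  constructor
  · ext i j
    fin_cases i <;> fin_cases j <;>
      simp [P01, Matrix.mul_apply, Fin.sum_univ_three, Matrix.one_apply,
        Matrix.vecHead, Matrix.vecTail]
  · simp [P01, Matrix.det_fin_three]

lemma P02_mem : P02 ∈ SO3 := by
  constructor
  · ext i j
    fin_cases i <;> fin_cases j <;>
      simp [P02, Matrix.mul_apply, Fin.sum_univ_three, Matrix.one_apply,
        Matrix.vecHead, Matrix.vecTail]
  · simp [P02, Matrix.det_fin_three]

lemma sq_integrable {μ : Measure M3} (hμ : IsHaarSO3 μ) (a b : Fin 3) :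
    Integrable (fun Q : M3 => (Q a b)^2) μ := by
  refine integrable_of_bdd hμ ((cont_entry a b).pow 2) (C := 1) fun Q hQ => ?_
  rw [abs_pow]
  exact pow_le_one₀ (abs_nonneg _) (entry_abs_le hQ a b)

lemma sq_int' {μ : Measure M3} (hμ : IsHaarSO3 μ) (a j : Fin 3) :
    ∫ Q, (Q a j)^2 ∂μ = 1/3 := by
  haveI := hμ.prob
  have key1 := cov hμ P01_mem one_mem_SO3 (fun Q => (Q 0 j)^2) ((cont_entry 0 j).pow 2)
  have key2 := cov hμ P02_mem one_mem_SO3 (fun Q => (Q 0 j)^2) ((cont_entry 0 j).pow 2)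
  have e1 : ∀ Q : M3, ((P01 * Q * 1) 0 j)^2 = (Q 1 j)^2 := by
    intro Q; rw [mul_one]
    simp [P01, Matrix.mul_apply, Fin.sum_univ_three]
  have e2 : ∀ Q : M3, ((P02 * Q * 1) 0 j)^2 = (Q 2 j)^2 := by
    intro Q; rw [mul_one]
    simp [P02, Matrix.mul_apply, Fin.sum_univ_three]
  rw [integral_congr_ae (Filter.Eventually.of_forall e1)] at key1
  rw [integral_congr_ae (Filter.Eventually.of_forall e2)] at key2
  have hsum : ∫ Q, ((Q 0 j)^2 + (Q 1 j)^2 + (Q 2 j)^2) ∂μ = 1 := by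
    rw [integral_congr_ae ((ae_mem_SO3 hμ).mono fun Q hQ => col_norm hQ j)]
    simp
  have h12 : ∫ Q, ((Q 0 j)^2 + (Q 1 j)^2) ∂μ = (∫ Q, (Q 0 j)^2 ∂μ) + ∫ Q, (Q 1 j)^2 ∂μ :=
    integral_add (sq_integrable hμ 0 j) (sq_integrable hμ 1 j)
  have h123 : ∫ Q, ((Q 0 j)^2 + (Q 1 j)^2 + (Q 2 j)^2) ∂μ
      = (∫ Q, ((Q 0 j)^2 + (Q 1 j)^2) ∂μ) + ∫ Q, (Q 2 j)^2 ∂μ :=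
    integral_add ((sq_integrable hμ 0 j).add (sq_integrable hμ 1 j)) (sq_integrable hμ 2 j)
  rw [h123, h12] at hsum
  fin_cases a
  · show ∫ Q, (Q 0 j)^2 ∂μ = 1/3
    linarith
  · show ∫ Q, (Q 1 j)^2 ∂μ = 1/3
    linarith
  · show ∫ Q, (Q 2 j)^2 ∂μ = 1/3
    linarith

lemma cross_int {μ : Measure M3} (hμ : IsHaarSO3 μ) {W : M3} (hW : W ∈ SO3) (i j : Fin 3)
    (hWij : ∀ Q : M3, (W * Q * 1) i i * (W * Q * 1) j j = -(Q i i * Q j j)) :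
    ∫ Q, Q i i * Q j j ∂μ = 0 := by
  have key := cov hμ hW one_mem_SO3 (fun Q => Q i i * Q j j)
    ((cont_entry i i).mul (cont_entry j j))
  rw [integral_congr_ae (Filter.Eventually.of_forall hWij), integral_neg] at key
  linarith

def D12 : M3 := Matrix.of ![![1,0,0],![0,-1,0],![0,0,-1]]
def D02 : M3 := Matrix.of ![![-1,0,0],![0,1,0],![0,0,-1]]

lemma D12_mem : D12 ∈ SO3 := by
  constructor
  · ext i j
    fin_cases i <;> fin_cases j <;>
      simp [D12, Matrix.mul_apply, Fin.sum_univ_three, Matrix.one_apply,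
        Matrix.vecHead, Matrix.vecTail]
  · simp [D12, Matrix.det_fin_three]

lemma D02_mem : D02 ∈ SO3 := by
  constructor
  · ext i j
    fin_cases i <;> fin_cases j <;>
      simp [D02, Matrix.mul_apply, Fin.sum_univ_three, Matrix.one_apply,
        Matrix.vecHead, Matrix.vecTail]
  · simp [D02, Matrix.det_fin_three]

lemma cross01 {μ : Measure M3} (hμ : IsHaarSO3 μ) : ∫ Q, Q 0 0 * Q 1 1 ∂μ = 0 := by
  refine cross_int hμ D12_mem 0 1 fun Q => ?_
  rw [mul_one]
  simp [D12, Matrix.mul_apply, Fin.sum_univ_three]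

lemma cross02 {μ : Measure M3} (hμ : IsHaarSO3 μ) : ∫ Q, Q 0 0 * Q 2 2 ∂μ = 0 := by
  refine cross_int hμ D12_mem 0 2 fun Q => ?_
  rw [mul_one]
  simp [D12, Matrix.mul_apply, Fin.sum_univ_three]

lemma cross12 {μ : Measure M3} (hμ : IsHaarSO3 μ) : ∫ Q, Q 1 1 * Q 2 2 ∂μ = 0 := by
  refine cross_int hμ D02_mem 1 2 fun Q => ?_
  rw [mul_one]
  simp [D02, Matrix.mul_apply, Fin.sum_univ_three]

lemma exp_lc_integrable {μ : Measure M3} (hμ : IsHaarSO3 μ) (s : Fin 3 → ℝ) :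
    Integrable (fun Q => Real.exp (lc s Q)) μ := by
  refine integrable_of_bdd hμ (Real.continuous_exp.comp (cont_lc s))
    (C := Real.exp (|s 0| + |s 1| + |s 2|)) fun Q hQ => ?_
  rw [Real.abs_exp]
  exact Real.exp_le_exp.mpr ((le_abs_self _).trans (lc_abs_le s hQ))

lemma cS_pos {μ : Measure M3} (hμ : IsHaarSO3 μ) (s : Fin 3 → ℝ) : 0 < cS μ s := by
  haveI := hμ.prob
  have hrw : cS μ s = ∫ Q, Real.exp (lc s Q) ∂μ :=
    integral_congr_ae (Filter.Eventually.of_forall fun Q => by simp only [trace_eq])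
  have hlow : ∀ᵐ Q ∂μ, Real.exp (-(|s 0| + |s 1| + |s 2|)) ≤ Real.exp (lc s Q) :=
    (ae_mem_SO3 hμ).mono fun Q hQ =>
      Real.exp_le_exp.mpr ((neg_le_neg (lc_abs_le s hQ)).trans (neg_abs_le _))
  have hmono : ∫ (_ : M3), Real.exp (-(|s 0| + |s 1| + |s 2|)) ∂μ
      ≤ ∫ Q, Real.exp (lc s Q) ∂μ :=
    integral_mono_ae (integrable_const _) (exp_lc_integrable hμ s) hlow
  rw [hrw]
  have : ∫ (_ : M3), Real.exp (-(|s 0| + |s 1| + |s 2|)) ∂μ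
      = Real.exp (-(|s 0| + |s 1| + |s 2|)) := by simp
  rw [this] at hmono
  exact lt_of_lt_of_le (Real.exp_pos _) hmono

lemma ent_exp_integrable {μ : Measure M3} (hμ : IsHaarSO3 μ) (s : Fin 3 → ℝ) (a : Fin 3) :
    Integrable (fun Q => Q a a * Real.exp (lc s Q)) μ := by
  refine integrable_of_bdd hμ ((cont_entry a a).mul (Real.continuous_exp.comp (cont_lc s)))
    (C := Real.exp (|s 0| + |s 1| + |s 2|)) fun Q hQ => ?_
  rw [abs_mul, Real.abs_exp]
  calc |Q a a| * Real.exp (lc s Q) ≤ 1 * Real.exp (|s 0| + |s 1| + |s 2|) := by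
        exact mul_le_mul (entry_abs_le hQ a a)
          (Real.exp_le_exp.mpr ((le_abs_self _).trans (lc_abs_le s hQ)))
          (Real.exp_pos _).le (by norm_num)
    _ = _ := one_mul _

lemma dS_eq {μ : Measure M3} (hμ : IsHaarSO3 μ) (s : Fin 3 → ℝ) (a : Fin 3) :
    dS μ s a = (∫ Q, Q a a * Real.exp (lc s Q) ∂μ) / cS μ s := by
  unfold dS pS
  rw [← integral_div]
  exact integral_congr_ae (Filter.Eventually.of_forall fun Q => by simp only [trace_eq]; ring)

lemma pair_iff {μ : Measure M3} (hμ : IsHaarSO3 μ) (s : Fin 3 → ℝ) (i j : Fin 3)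
    (hplus : (∫ Q, (Q i i + 1 * Q j j) * Real.exp (lc s Q) ∂μ = 0) ↔ s i + s j = 0)
    (hminus : (∫ Q, (Q i i + (-1) * Q j j) * Real.exp (lc s Q) ∂μ = 0) ↔ s i - s j = 0) :
    (s i = 0 ∧ s j = 0) ↔ (dS μ s i = 0 ∧ dS μ s j = 0) := by
  have hc := cS_pos hμ s
  have hii := ent_exp_integrable hμ s i
  have hjj := ent_exp_integrable hμ s j
  have hP : ∫ Q, (Q i i + 1 * Q j j) * Real.exp (lc s Q) ∂μ
      = (∫ Q, Q i i * Real.exp (lc s Q) ∂μ) + ∫ Q, Q j j * Real.exp (lc s Q) ∂μ := by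
    calc ∫ Q, (Q i i + 1 * Q j j) * Real.exp (lc s Q) ∂μ
        = ∫ Q, (Q i i * Real.exp (lc s Q) + Q j j * Real.exp (lc s Q)) ∂μ :=
          integral_congr_ae (Filter.Eventually.of_forall fun Q => by ring)
      _ = _ := integral_add hii hjj
  have hM : ∫ Q, (Q i i + (-1) * Q j j) * Real.exp (lc s Q) ∂μ
      = (∫ Q, Q i i * Real.exp (lc s Q) ∂μ) - ∫ Q, Q j j * Real.exp (lc s Q) ∂μ := by
    calc ∫ Q, (Q i i + (-1) * Q j j) * Real.exp (lc s Q) ∂μ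
        = ∫ Q, (Q i i * Real.exp (lc s Q) - Q j j * Real.exp (lc s Q)) ∂μ :=
          integral_congr_ae (Filter.Eventually.of_forall fun Q => by ring)
      _ = _ := integral_sub hii hjj
  rw [hP] at hplus
  rw [hM] at hminus
  rw [dS_eq hμ s i, dS_eq hμ s j]
  constructor
  · rintro ⟨hsi, hsj⟩
    have h1 := hplus.mpr (by rw [hsi, hsj]; ring)
    have h2 := hminus.mpr (by rw [hsi, hsj]; ring)
    constructor
    · rw [show ∫ Q, Q i i * Real.exp (lc s Q) ∂μ = 0 by linarith, zero_div]
    · rw [show ∫ Q, Q j j * Real.exp (lc s Q) ∂μ = 0 by linarith, zero_div]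
  · rintro ⟨h1, h2⟩
    have hi0 : ∫ Q, Q i i * Real.exp (lc s Q) ∂μ = 0 := by
      rcases div_eq_zero_iff.mp h1 with h | h
      · exact h
      · exact absurd h (ne_of_gt hc)
    have hj0 : ∫ Q, Q j j * Real.exp (lc s Q) ∂μ = 0 := by
      rcases div_eq_zero_iff.mp h2 with h | h
      · exact h
      · exact absurd h (ne_of_gt hc)
    have e1 := hplus.mp (by rw [hi0, hj0]; ring)
    have e2 := hminus.mp (by rw [hi0, hj0]; ring)
    constructor <;> linarith

def Vp01 : M3 := Matrix.of ![![0,-1,0],![-1,0,0],![0,0,-1]]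
def Vp02 : M3 := Matrix.of ![![0,0,-1],![0,-1,0],![-1,0,0]]
def P12p : M3 := Matrix.of ![![1,0,0],![0,0,1],![0,-1,0]]
def N12 : M3 := Matrix.of ![![-1,0,0],![0,0,1],![0,1,0]]

lemma Vp01_mem : Vp01 ∈ SO3 := by
  constructor
  · ext i j
    fin_cases i <;> fin_cases j <;>
      simp [Vp01, Matrix.mul_apply, Fin.sum_univ_three, Matrix.one_apply,
        Matrix.vecHead, Matrix.vecTail]
  · simp [Vp01, Matrix.det_fin_three]

lemma Vp02_mem : Vp02 ∈ SO3 := by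
  constructor
  · ext i j
    fin_cases i <;> fin_cases j <;>
      simp [Vp02, Matrix.mul_apply, Fin.sum_univ_three, Matrix.one_apply,
        Matrix.vecHead, Matrix.vecTail]
  · simp [Vp02, Matrix.det_fin_three]

lemma P12p_mem : P12p ∈ SO3 := by
  constructor
  · ext i j
    fin_cases i <;> fin_cases j <;>
      simp [P12p, Matrix.mul_apply, Fin.sum_univ_three, Matrix.one_apply,
        Matrix.vecHead, Matrix.vecTail]
  · simp [P12p, Matrix.det_fin_three]

lemma N12_mem : N12 ∈ SO3 := by
  constructor
  · ext i j
    fin_cases i <;> fin_cases j <;>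
      simp [N12, Matrix.mul_apply, Fin.sum_univ_three, Matrix.one_apply,
        Matrix.vecHead, Matrix.vecTail]
  · simp [N12, Matrix.det_fin_three]

lemma pair01 {μ : Measure M3} (hμ : IsHaarSO3 μ) (s : Fin 3 → ℝ) :
    (s 0 = 0 ∧ s 1 = 0) ↔ (dS μ s 0 = 0 ∧ dS μ s 1 = 0) := by
  refine pair_iff hμ s 0 1 ?_ ?_
  · exact half hμ s 0 1 1 (by norm_num) P01_mem Vp01_mem (![-s 1, -s 0, s 2]) (s 0 + s 1)
      (fun Q => by simp [P01, Vp01, Matrix.mul_apply, Fin.sum_univ_three, Matrix.vecHead, Matrix.vecTail]; try ring)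
      (fun Q => by simp [lc, P01, Vp01, Matrix.mul_apply, Fin.sum_univ_three, Matrix.vecHead, Matrix.vecTail]; try ring)
      (fun Q => by simp [lc]; ring)
      (cross01 hμ) (sq_int' hμ 1 1)
  · exact half hμ s 0 1 (-1) (by norm_num) P01_mem P01_mem (![s 1, s 0, s 2]) (s 0 - s 1)
      (fun Q => by simp [P01, Matrix.mul_apply, Fin.sum_univ_three, Matrix.vecHead, Matrix.vecTail]; try ring)
      (fun Q => by simp [lc, P01, Matrix.mul_apply, Fin.sum_univ_three, Matrix.vecHead, Matrix.vecTail]; try ring)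
      (fun Q => by simp [lc]; ring)
      (cross01 hμ) (sq_int' hμ 1 1)

lemma pair02 {μ : Measure M3} (hμ : IsHaarSO3 μ) (s : Fin 3 → ℝ) :
    (s 0 = 0 ∧ s 2 = 0) ↔ (dS μ s 0 = 0 ∧ dS μ s 2 = 0) := by
  refine pair_iff hμ s 0 2 ?_ ?_
  · exact half hμ s 0 2 1 (by norm_num) P02_mem Vp02_mem (![-s 2, s 1, -s 0]) (s 0 + s 2)
      (fun Q => by simp [P02, Vp02, Matrix.mul_apply, Fin.sum_univ_three, Matrix.vecHead, Matrix.vecTail]; try ring)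
      (fun Q => by simp [lc, P02, Vp02, Matrix.mul_apply, Fin.sum_univ_three, Matrix.vecHead, Matrix.vecTail]; try ring)
      (fun Q => by simp [lc]; ring)
      (cross02 hμ) (sq_int' hμ 2 2)
  · exact half hμ s 0 2 (-1) (by norm_num) P02_mem P02_mem (![s 2, s 1, s 0]) (s 0 - s 2)
      (fun Q => by simp [P02, Matrix.mul_apply, Fin.sum_univ_three, Matrix.vecHead, Matrix.vecTail]; try ring)
      (fun Q => by simp [lc, P02, Matrix.mul_apply, Fin.sum_univ_three, Matrix.vecHead, Matrix.vecTail]; try ring)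
      (fun Q => by simp [lc]; ring)
      (cross02 hμ) (sq_int' hμ 2 2)

lemma pair12 {μ : Measure M3} (hμ : IsHaarSO3 μ) (s : Fin 3 → ℝ) :
    (s 1 = 0 ∧ s 2 = 0) ↔ (dS μ s 1 = 0 ∧ dS μ s 2 = 0) := by
  refine pair_iff hμ s 1 2 ?_ ?_
  · exact half hμ s 1 2 1 (by norm_num) P12p_mem P12p_mem (![s 0, -s 2, -s 1]) (s 1 + s 2)
      (fun Q => by simp [P12p, Matrix.mul_apply, Fin.sum_univ_three, Matrix.vecHead, Matrix.vecTail]; try ring)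
      (fun Q => by simp [lc, P12p, Matrix.mul_apply, Fin.sum_univ_three, Matrix.vecHead, Matrix.vecTail]; try ring)
      (fun Q => by simp [lc]; ring)
      (cross12 hμ) (sq_int' hμ 2 2)
  · exact half hμ s 1 2 (-1) (by norm_num) N12_mem N12_mem (![s 0, s 2, s 1]) (s 1 - s 2)
      (fun Q => by simp [N12, Matrix.mul_apply, Fin.sum_univ_three, Matrix.vecHead, Matrix.vecTail]; try ring)
      (fun Q => by simp [lc, N12, Matrix.mul_apply, Fin.sum_univ_three, Matrix.vecHead, Matrix.vecTail]; try ring)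
      (fun Q => by simp [lc]; ring)
      (cross12 hμ) (sq_int' hμ 2 2)


/-- For `S = diag (s₁,s₂,s₃)` with `s₁ ≥ s₂ ≥ |s₃| ≥ 0` and distinct indices `i ≠ j`:
`sᵢ = sⱼ = 0` iff `dᵢ(S) = dⱼ(S) = 0`. -/
theorem s_zero_iff_d_zero (μ : Measure M3) (hμ : IsHaarSO3 μ)
    (s : Fin 3 → ℝ) (h1 : s 1 ≤ s 0) (h2 : |s 2| ≤ s 1)
    (i j : Fin 3) (hij : i ≠ j) :
    (s i = 0 ∧ s j = 0) ↔ (dS μ s i = 0 ∧ dS μ s j = 0) := by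

  fin_cases i <;> fin_cases j <;>
    first
      | exact absurd rfl hij
      | (exact pair01 hμ s)
      | (exact pair02 hμ s)
      | (exact pair12 hμ s)
      | (have := pair01 hμ s; tauto)
      | (have := pair02 hμ s; tauto)
      | (have := pair12 hμ s; tauto)
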